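/- arXiv:2604.17526 — 2 statements merged into one kernel-verified Lean document; each statement's English description precedes it below -/
import Mathlib

section
/- Fix ε ∈ (0,1) and K ≥ ⌈d/ε⌉. Define ε_k = εK / ((k−1)(1−ε) + εK) for k = 1,...,K+1 (so that the 1/ε_k are linearly spaced from 1 to 1/ε). Then there is an absolute constant C (independent of d, ε, K) such that Σ_{k=1}^K χ²(N(0, ε_{k+1} I_d); N(0, ε_k I_d)) ≤ C, and consequently Π_{k=1}^K (1 + χ²(π_{k+1}; π_k)) ≤ e^C. -/
open MeasureTheory

/-- The density of the centered Gaussian `N(0, ε I_d)` on `ℝ^d`. -/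
noncomputable def gaussDensity (d : ℕ) (ε : ℝ) (x : EuclideanSpace ℝ (Fin d)) : ℝ :=
  (2 * Real.pi * ε) ^ (-(d : ℝ) / 2) * Real.exp (-‖x‖ ^ 2 / (2 * ε))

/-- `χ²(N(0, a I_d); N(0, b I_d))`, with `χ²(p; q) = ∫ p²/q − 1`. -/
noncomputable def chiSqGauss (d : ℕ) (a b : ℝ) : ℝ :=
  (∫ x : EuclideanSpace ℝ (Fin d), (gaussDensity d a x) ^ 2 / gaussDensity d b x) - 1

open Real in
lemma chiSqGauss_eq (d : ℕ) {a b : ℝ} (ha : 0 < a) (hab : a ≤ b) :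
    chiSqGauss d a b = (b ^ 2 / (a * (2 * b - a))) ^ ((d:ℝ) / 2) - 1 := by
  have hb : 0 < b := lt_of_lt_of_le ha hab
  have h2ba : 0 < 2 * b - a := by linarith
  have hπ := Real.pi_pos
  set t : ℝ := (d : ℝ) / 2 with ht
  set c : ℝ := (2 * b - a) / (2 * a * b) with hc
  have hcpos : 0 < c := by positivity
  have hpt : ∀ x : EuclideanSpace ℝ (Fin d),
      (gaussDensity d a x) ^ 2 / gaussDensity d b x
      = (((2 * Real.pi * a) ^ (-t)) ^ 2 / (2 * Real.pi * b) ^ (-t))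
        * Real.exp (-c * ‖x‖ ^ 2) := by
    intro x
    unfold gaussDensity
    have h1 : -(d:ℝ)/2 = -t := by rw [ht]; ring
    rw [h1, mul_pow, div_eq_iff (by positivity)]
    have hexp : rexp (-‖x‖^2/(2*a)) ^ 2 = rexp (-c*‖x‖^2) * rexp (-‖x‖^2/(2*b)) := by
      rw [sq, ← Real.exp_add, ← Real.exp_add]
      congr 1
      rw [hc]
      field_simp
      ring
    rw [hexp]
    have hB : ((2*π*b) ^ (-t) : ℝ) ≠ 0 := by positivity
    field_simp
  rw [chiSqGauss]
  rw [MeasureTheory.integral_congr_ae (Filter.Eventually.of_forall hpt)]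
  rw [MeasureTheory.integral_const_mul]
  rw [GaussianFourier.integral_rexp_neg_mul_sq_norm hcpos]
  have hfr : ((Module.finrank ℝ (EuclideanSpace ℝ (Fin d)) : ℝ) / 2) = t := by
    rw [finrank_euclideanSpace_fin]
  rw [hfr]
  congr 2
  have e1 : ((2 * Real.pi * a) ^ (-t)) ^ 2 = ((2 * Real.pi * a) ^ 2 : ℝ) ^ (-t) := by
    rw [← Real.rpow_natCast ((2 * Real.pi * a) ^ (-t)) 2, ← Real.rpow_mul (by positivity),
      ← Real.rpow_natCast (2 * Real.pi * a) 2, ← Real.rpow_mul (by positivity)]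
    norm_num [mul_comm]
  rw [e1, Real.rpow_neg (by positivity), Real.rpow_neg (by positivity),
    div_eq_mul_inv, inv_inv]
  rw [mul_assoc, ← Real.mul_rpow (by positivity) (by positivity)]
  rw [inv_mul_eq_div, ← Real.div_rpow (by positivity) (by positivity)]
  congr 1
  rw [hc]
  field_simp

lemma rpow_chi_nonneg (n : ℕ) {x : ℝ} (hx0 : 0 ≤ x) (hx1 : x < 1) :
    0 ≤ ((1 - x)⁻¹) ^ ((n:ℝ)/2) - 1 := by
  have h1x : 0 < 1 - x := by linarith
  have h1 : (1:ℝ) ≤ (1 - x)⁻¹ := by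
    rw [le_inv_comm₀ one_pos h1x]; simp; linarith
  have := Real.one_le_rpow h1 (by positivity : (0:ℝ) ≤ (n:ℝ)/2)
  linarith

lemma rpow_chi_bound (n : ℕ) {x : ℝ} (hx0 : 0 ≤ x) (hx1 : x < 1)
    (h : n = 0 ∨ (x ≤ 1/4 ∧ (n:ℝ) * x ≤ 1)) :
    ((1 - x)⁻¹) ^ ((n:ℝ)/2) - 1 ≤ 2 * n * x := by
  rcases h with h | ⟨hx4, hnx⟩
  · subst h; simp
  · have h1x : 0 < 1 - x := by linarith
    have hinv : 0 < (1 - x)⁻¹ := by positivity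
    have hlog : Real.log (1-x)⁻¹ ≤ (4/3) * x := by
      have h2 := Real.log_le_sub_one_of_pos hinv
      have hxd : (1-x)⁻¹ - 1 = x / (1-x) := by field_simp; ring
      have h3 : x / (1-x) ≤ (4/3)*x := by
        rw [div_le_iff₀ h1x]; nlinarith
      linarith
    have hlog0 : 0 ≤ Real.log (1-x)⁻¹ := by
      apply Real.log_nonneg
      rw [le_inv_comm₀ one_pos h1x]; simp; linarith
    set s : ℝ := Real.log (1-x)⁻¹ * ((n:ℝ)/2) with hs
    have hs0 : 0 ≤ s := mul_nonneg hlog0 (by positivity)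
    have hsle : s ≤ 2/3 := by
      have : s ≤ (4/3)*x * ((n:ℝ)/2) := by
        apply mul_le_mul_of_nonneg_right hlog (by positivity)
      nlinarith
    rw [Real.rpow_def_of_pos hinv]
    have hexp1 : Real.exp s ≤ 3 := by
      have := Real.exp_one_lt_d9
      have h4 : Real.exp s ≤ Real.exp 1 := Real.exp_le_exp.mpr (by linarith)
      linarith
    have hexp2 : Real.exp s - 1 ≤ s * Real.exp s := by
      have h5 := Real.add_one_le_exp (-s)
      have h6 : Real.exp (-s) = (Real.exp s)⁻¹ := Real.exp_neg s
      have h7 : 0 < Real.exp s := Real.exp_pos s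
      rw [h6] at h5
      nlinarith [mul_le_mul_of_nonneg_right h5 h7.le, mul_inv_cancel₀ h7.ne']
    have h9 : Real.exp s - 1 ≤ 3 * s := by nlinarith
    have h8 : 3 * s ≤ 2 * n * x := by
      rw [hs]
      nlinarith
    linarith

set_option maxHeartbeats 1000000

/-- Fix `ε ∈ (0,1)` and `K ≥ ⌈d/ε⌉`, and let
`ε_k = εK / ((k−1)(1−ε) + εK)` (so the `1/ε_k` are linearly spaced from `1` to `1/ε`).
There is an absolute constant `C` (independent of `d`, `ε`, `K`) such that
`∑_{k=1}^K χ²(N(0, ε_{k+1} I_d); N(0, ε_k I_d)) ≤ C`, and consequently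
`∏_{k=1}^K (1 + χ²(π_{k+1}; π_k)) ≤ e^C`. -/
theorem gaussian_annealing_chiSq_sum_bounded :
    ∃ C : ℝ, 0 < C ∧ ∀ (d K : ℕ) (ε : ℝ), 0 < ε → ε < 1 → (d : ℝ) / ε ≤ K →
      (∑ k ∈ Finset.Icc 1 K,
          chiSqGauss d (ε * K / (((k : ℝ) + 1 - 1) * (1 - ε) + ε * K))
                       (ε * K / (((k : ℝ) - 1) * (1 - ε) + ε * K)) ≤ C) ∧
      (∏ k ∈ Finset.Icc 1 K,
          (1 + chiSqGauss d (ε * K / (((k : ℝ) + 1 - 1) * (1 - ε) + ε * K))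
                            (ε * K / (((k : ℝ) - 1) * (1 - ε) + ε * K)))
        ≤ Real.exp C) := by
  refine ⟨2, by norm_num, fun d K ε hε hε1 hdK => ?_⟩
  rcases Nat.eq_zero_or_pos K with hK0 | hK0
  · subst hK0
    constructor
    · simp
    · simp only [show Finset.Icc 1 0 = (∅ : Finset ℕ) by rfl, Finset.prod_empty]
      exact Real.one_le_exp (by norm_num)
  have hKpos : (0:ℝ) < K := by exact_mod_cast hK0
  obtain ⟨c, hcdef⟩ : ∃ c : ℝ, c = 1 - ε := ⟨_, rfl⟩
  obtain ⟨m, hmdef⟩ : ∃ m : ℝ, m = ε * K := ⟨_, rfl⟩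
  have hc : (0:ℝ) < c := by rw [hcdef]; linarith
  have hm : (0:ℝ) < m := by rw [hmdef]; exact mul_pos hε hKpos
  have hc1 : c ≤ 1 := by rw [hcdef]; linarith
  have hdm : (d:ℝ) ≤ m := by
    rw [div_le_iff₀ hε] at hdK
    rw [hmdef]; linarith [hdK]
  have key : ∀ k ∈ Finset.Icc 1 K,
      chiSqGauss d (ε * K / (((k : ℝ) + 1 - 1) * (1 - ε) + ε * K))
                   (ε * K / (((k : ℝ) - 1) * (1 - ε) + ε * K))
        ≤ 2 * m * c * ((((k:ℝ)-1)*c + m)⁻¹ - ((k:ℝ)*c + m)⁻¹) ∧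
      0 ≤ chiSqGauss d (ε * K / (((k : ℝ) + 1 - 1) * (1 - ε) + ε * K))
                   (ε * K / (((k : ℝ) - 1) * (1 - ε) + ε * K)) := by
    intro k hk
    obtain ⟨hk1, hkK⟩ := Finset.mem_Icc.mp hk
    have hk1R : (1:ℝ) ≤ (k:ℝ) := by exact_mod_cast hk1
    obtain ⟨Dk, hDk⟩ : ∃ D : ℝ, D = (k:ℝ) * c + m := ⟨_, rfl⟩
    obtain ⟨Dk1, hDk1⟩ : ∃ D : ℝ, D = ((k:ℝ)-1) * c + m := ⟨_, rfl⟩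
    have hDkpos : 0 < Dk := by rw [hDk]; nlinarith
    have hDk1pos : 0 < Dk1 := by rw [hDk1]; nlinarith
    have hDle : Dk1 ≤ Dk := by rw [hDk, hDk1]; nlinarith
    have harg1 : ε * K / (((k : ℝ) + 1 - 1) * (1 - ε) + ε * K) = m / Dk := by
      rw [hDk, hmdef, hcdef]; ring_nf
    have harg2 : ε * K / (((k : ℝ) - 1) * (1 - ε) + ε * K) = m / Dk1 := by
      rw [hDk1, hmdef, hcdef]
    rw [harg1, harg2, ← hDk, ← hDk1]
    have hapos : 0 < m / Dk := div_pos hm hDkpos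
    have habe : m / Dk ≤ m / Dk1 := by
      apply div_le_div_of_nonneg_left hm.le hDk1pos hDle
    rw [chiSqGauss_eq d hapos habe]
    obtain ⟨x, hx⟩ : ∃ x : ℝ, x = (c / Dk)^2 := ⟨_, rfl⟩
    have hcDk : c < Dk := by rw [hDk]; nlinarith
    have hcd1 : c / Dk < 1 := (div_lt_one hDkpos).mpr hcDk
    have hcd0 : 0 ≤ c / Dk := div_nonneg hc.le hDkpos.le
    have hx0 : 0 ≤ x := by rw [hx]; positivity
    have hx1 : x < 1 := by rw [hx]; nlinarith
    have hid : (m/Dk1)^2 / ((m/Dk) * (2*(m/Dk1) - m/Dk)) = (1 - x)⁻¹ := by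
      have hrel : Dk1 = Dk - c := by rw [hDk, hDk1]; ring
      have h2b : 0 < 2*(m/Dk1) - m/Dk := by nlinarith [habe, hapos]
      apply eq_inv_of_mul_eq_one_right
      rw [hx, hrel]
      rw [hrel] at h2b
      rw [mul_comm, div_mul_eq_mul_div, div_eq_one_iff_eq (mul_pos hapos h2b).ne']
      field_simp [hDkpos.ne', hm.ne', sub_ne_zero.mpr (ne_of_gt hcDk)]
      ring
    rw [hid]
    constructor
    · have hbnd : ((1 - x)⁻¹) ^ ((d:ℝ)/2) - 1 ≤ 2 * d * x := by
        apply rpow_chi_bound d hx0 hx1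
        rcases Nat.eq_zero_or_pos d with hd0 | hd0
        · exact Or.inl hd0
        · right
          have hd1 : (1:ℝ) ≤ (d:ℝ) := by exact_mod_cast hd0
          have hm1 : (1:ℝ) ≤ m := le_trans hd1 hdm
          have hDge : c + 1 ≤ Dk := by rw [hDk]; nlinarith
          constructor
          · have : c / Dk ≤ 1/2 := by
              rw [div_le_iff₀ hDkpos]; nlinarith
            rw [hx]; nlinarith
          · have hxm : x ≤ 1/m^2 := by
              have h5 : c / Dk ≤ 1/m := by
                rw [div_le_div_iff₀ hDkpos hm]
                nlinarith
              rw [hx]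
              calc (c/Dk)^2 ≤ (1/m)^2 := by nlinarith
                _ = 1/m^2 := by rw [div_pow]; norm_num
            calc (d:ℝ) * x ≤ m * (1/m^2) := by
                  apply mul_le_mul hdm hxm hx0 hm.le
              _ = 1/m := by field_simp
              _ ≤ 1 := by rw [div_le_one hm]; exact hm1
      have hdiff : Dk1⁻¹ - Dk⁻¹ = c / (Dk1 * Dk) := by
        have hrel : Dk - Dk1 = c := by rw [hDk, hDk1]; ring
        rw [← hrel]
        field_simp [hDkpos.ne', hDk1pos.ne']
      have hxval : x = c^2/Dk^2 := by rw [hx, div_pow]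
      have hstep : 2 * (d:ℝ) * x ≤ 2 * m * c * (Dk1⁻¹ - Dk⁻¹) := by
        rw [hdiff, hxval]
        rw [show 2 * (d:ℝ) * (c^2/Dk^2) = (2 * d * c^2) / Dk^2 by ring,
          show 2 * m * c * (c / (Dk1 * Dk)) = (2 * m * c^2) / (Dk1 * Dk) by ring]
        rw [div_le_div_iff₀ (by positivity) (by positivity)]
        have hmulle : (d:ℝ) * (Dk1 * Dk) ≤ m * (Dk * Dk) := by
          apply mul_le_mul hdm (mul_le_mul_of_nonneg_right hDle hDkpos.le)
            (by positivity) hm.le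
        nlinarith [sq_nonneg c, mul_le_mul_of_nonneg_left hmulle (by positivity : (0:ℝ) ≤ 2 * c^2)]
      calc ((1 - x)⁻¹) ^ ((d:ℝ)/2) - 1 ≤ 2 * d * x := hbnd
        _ ≤ 2 * m * c * (Dk1⁻¹ - Dk⁻¹) := hstep
    · exact rpow_chi_nonneg d hx0 hx1
  have hsum : ∑ k ∈ Finset.Icc 1 K,
      chiSqGauss d (ε * K / (((k : ℝ) + 1 - 1) * (1 - ε) + ε * K))
                   (ε * K / (((k : ℝ) - 1) * (1 - ε) + ε * K)) ≤ 2 := by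
    calc ∑ k ∈ Finset.Icc 1 K,
        chiSqGauss d (ε * K / (((k : ℝ) + 1 - 1) * (1 - ε) + ε * K))
                     (ε * K / (((k : ℝ) - 1) * (1 - ε) + ε * K))
        ≤ ∑ k ∈ Finset.Icc 1 K, 2 * m * c * ((((k:ℝ)-1)*c + m)⁻¹ - ((k:ℝ)*c + m)⁻¹) :=
          Finset.sum_le_sum (fun k hk => (key k hk).1)
      _ = 2 * m * c * ∑ k ∈ Finset.Icc 1 K, ((((k:ℝ)-1)*c + m)⁻¹ - ((k:ℝ)*c + m)⁻¹) := by
          rw [Finset.mul_sum]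
      _ = 2 * m * c * (m⁻¹ - ((K:ℝ)*c + m)⁻¹) := by
          congr 1
          rw [← Finset.Ico_add_one_right_eq_Icc, Finset.sum_Ico_eq_sum_range]
          have h := Finset.sum_range_sub' (fun i : ℕ => (((i:ℝ))*c + m)⁻¹) K
          simp only [Nat.cast_zero, zero_mul, zero_add] at h
          rw [← h]
          apply Finset.sum_congr (by norm_num)
          intro i hi
          push_cast
          ring_nf
      _ ≤ 2 * m * c * m⁻¹ := by
          have h1 : (0:ℝ) ≤ ((K:ℝ)*c + m)⁻¹ := by positivity
          have h2 : (0:ℝ) ≤ 2 * m * c := by positivity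
          nlinarith
      _ = 2 * c := by field_simp
      _ ≤ 2 := by linarith
  refine ⟨hsum, ?_⟩
  calc ∏ k ∈ Finset.Icc 1 K,
      (1 + chiSqGauss d (ε * K / (((k : ℝ) + 1 - 1) * (1 - ε) + ε * K))
                        (ε * K / (((k : ℝ) - 1) * (1 - ε) + ε * K)))
      ≤ ∏ k ∈ Finset.Icc 1 K,
        Real.exp (chiSqGauss d (ε * K / (((k : ℝ) + 1 - 1) * (1 - ε) + ε * K))
                               (ε * K / (((k : ℝ) - 1) * (1 - ε) + ε * K))) := by
        apply Finset.prod_le_prod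
        · intro k hk; have := (key k hk).2; linarith
        · intro k hk
          have := Real.add_one_le_exp (chiSqGauss d
            (ε * K / (((k : ℝ) + 1 - 1) * (1 - ε) + ε * K))
            (ε * K / (((k : ℝ) - 1) * (1 - ε) + ε * K)))
          linarith
    _ = Real.exp (∑ k ∈ Finset.Icc 1 K,
          chiSqGauss d (ε * K / (((k : ℝ) + 1 - 1) * (1 - ε) + ε * K))
                       (ε * K / (((k : ℝ) - 1) * (1 - ε) + ε * K))) := (Real.exp_sum _ _).symm
    _ ≤ Real.exp 2 := Real.exp_le_exp.mpr hsum
end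

section
/- Let ζ̃_1,...,ζ̃_N be nonnegative i.i.d. L² random variables with mean μ̃ > 0 and variance σ̃², and set ζ_i = ζ̃_i / S_N where S_N = Σ_{j=1}^N ζ̃_j. Then E[Σ_{i=1}^N ζ_i²] ≤ 8(σ̃² + μ̃²)/(N μ̃²). -/
open MeasureTheory ProbabilityTheory

/-- Let `ζ̃_1, …, ζ̃_N` be nonnegative i.i.d. `L²` random variables with mean
`μ̃ > 0` and variance `σ̃²`, and set `ζ_i = ζ̃_i / S_N` where `S_N = ∑_j ζ̃_j`.  Then
`E[∑_i ζ_i²] ≤ 8(σ̃² + μ̃²)/(N μ̃²)`. -/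
theorem normalized_weights_sq_sum_bound
    {Ω : Type*} [MeasurableSpace Ω] (P : Measure Ω) [IsProbabilityMeasure P]
    (N : ℕ) (hN : 0 < N) (ζ : Fin N → Ω → ℝ)
    (hmeas : ∀ i, Measurable (ζ i))
    (hnn : ∀ i ω, 0 ≤ ζ i ω)
    (hL2 : ∀ i, MemLp (ζ i) 2 P)
    (hindep : iIndepFun ζ P)
    (hident : ∀ i j, IdentDistrib (ζ i) (ζ j) P P)
    (μt σ2 : ℝ) (hμpos : 0 < μt)
    (hmean : ∀ i, ∫ ω, ζ i ω ∂P = μt)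
    (hvar : ∀ i, ∫ ω, (ζ i ω - μt) ^ 2 ∂P = σ2) :
    ∫ ω, ∑ i, (ζ i ω / ∑ j, ζ j ω) ^ 2 ∂P ≤ 8 * (σ2 + μt ^ 2) / (N * μt ^ 2) := by
  classical
  have i0 : Fin N := ⟨0, hN⟩
  have hNr : (0:ℝ) < (N:ℝ) := by exact_mod_cast hN
  have hσ2 : 0 ≤ σ2 := (hvar i0) ▸ integral_nonneg fun ω => sq_nonneg _
  set S : Ω → ℝ := fun ω => ∑ j, ζ j ω with hSdef
  have hSmeas : Measurable S := Finset.measurable_sum _ fun i _ => hmeas i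
  have hSnn : ∀ ω, 0 ≤ S ω := fun ω => Finset.sum_nonneg fun i _ => hnn i ω
  set c : ℝ := (N:ℝ) * μt / 2 with hcdef
  have hc : 0 < c := by positivity
  set f : Ω → ℝ := fun ω => ∑ i, (ζ i ω / S ω) ^ 2 with hfdef
  have hfmeas : Measurable f :=
    Finset.measurable_sum _ fun i _ => ((hmeas i).div hSmeas).pow_const 2
  have hfnn : ∀ ω, 0 ≤ f ω := fun ω => Finset.sum_nonneg fun i _ => sq_nonneg _
  -- pointwise bound by 1
  have hf1 : ∀ ω, f ω ≤ 1 := by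
    intro ω
    rcases eq_or_lt_of_le (hSnn ω) with h0 | hpos
    · simp only [hfdef, ← h0, div_zero]
      simp
    · calc f ω ≤ ∑ i, ζ i ω / S ω := by
            refine Finset.sum_le_sum fun i _ => ?_
            have hle : ζ i ω / S ω ≤ 1 := by
              rw [div_le_one hpos]
              exact Finset.single_le_sum (fun j _ => hnn j ω) (Finset.mem_univ i)
            have hge : 0 ≤ ζ i ω / S ω := div_nonneg (hnn i ω) hpos.le
            nlinarith
        _ = 1 := by rw [← Finset.sum_div, div_self hpos.ne']
  set A : Set Ω := {ω | c ≤ S ω} with hAdef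
  have hAmeas : MeasurableSet A := measurableSet_le measurable_const hSmeas
  set g : Ω → ℝ := fun ω => (∑ i, ζ i ω ^ 2) / c ^ 2 with hgdef
  have hgnn : ∀ ω, 0 ≤ g ω :=
    fun ω => div_nonneg (Finset.sum_nonneg fun i _ => sq_nonneg _) (sq_nonneg _)
  -- pointwise key bound
  have key : ∀ ω, f ω ≤ A.indicator g ω + Aᶜ.indicator (fun _ => (1:ℝ)) ω := by
    intro ω
    by_cases hA : ω ∈ A
    · rw [Set.indicator_of_mem hA, Set.indicator_of_notMem (by simpa using hA)]
      rw [add_zero]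
      have hSpos : 0 < S ω := lt_of_lt_of_le hc hA
      have : f ω ≤ ∑ i, ζ i ω ^ 2 / c ^ 2 := by
        refine Finset.sum_le_sum fun i _ => ?_
        rw [div_pow]
        exact div_le_div_of_nonneg_left (sq_nonneg _) (by positivity)
          (pow_le_pow_left₀ hc.le hA 2)
      simpa [hgdef, Finset.sum_div] using this
    · rw [Set.indicator_of_notMem hA, Set.indicator_of_mem (by simpa using hA)]
      rw [zero_add]
      exact hf1 ω
  -- integrability
  have hζsqint : ∀ i : Fin N, Integrable (fun ω => ζ i ω ^ 2) P := fun i =>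
    (hL2 i).integrable_sq
  have hgint : Integrable g P :=
    (integrable_finset_sum _ fun i _ => hζsqint i).div_const _
  have hrhsint : Integrable (fun ω => A.indicator g ω + Aᶜ.indicator (fun _ => (1:ℝ)) ω) P :=
    (hgint.indicator hAmeas).add ((integrable_const 1).indicator hAmeas.compl)
  have hfint : Integrable f P := by
    refine (integrable_const (1:ℝ)).mono' hfmeas.aestronglyMeasurable ?_
    filter_upwards with ω
    rw [Real.norm_eq_abs, abs_of_nonneg (hfnn ω)]
    exact hf1 ω
  -- variance of each ζ i
  have hvari : ∀ i : Fin N, variance (ζ i) P = σ2 := by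
    intro i
    rw [variance_eq_integral (hmeas i).aemeasurable, hmean i]
    exact hvar i
  -- second moment
  have hsq : ∀ i : Fin N, ∫ ω, ζ i ω ^ 2 ∂P = σ2 + μt ^ 2 := by
    intro i
    have h := variance_eq_sub (hL2 i)
    rw [hvari i, hmean i] at h
    simp_rw [Pi.pow_apply] at h
    linarith
  -- variance of the sum
  have hSfun : S = ∑ i, ζ i := by funext ω; simp [hSdef, Finset.sum_apply]
  have hSL2 : MemLp S 2 P := by
    rw [hSfun]; exact memLp_finset_sum' _ fun i _ => hL2 i
  have hvarS : variance S P = (N:ℝ) * σ2 := by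
    rw [hSfun, IndepFun.variance_sum (fun i _ => hL2 i)
      (fun i _ j _ hij => hindep.indepFun hij)]
    simp [hvari, Finset.sum_const, mul_comm]
  have hmeanS : ∫ ω, S ω ∂P = (N:ℝ) * μt := by
    rw [hSdef]
    rw [integral_finset_sum _ fun i _ => (hL2 i).integrable one_le_two]
    simp [hmean, Finset.sum_const, mul_comm]
  -- Chebyshev
  have hcheb : (P Aᶜ).toReal ≤ (N:ℝ) * σ2 / c ^ 2 := by
    have hsub : Aᶜ ⊆ {ω | c ≤ |S ω - ∫ x, S x ∂P|} := by
      intro ω hω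
      have hlt : S ω < c := by simpa [hAdef] using hω
      rw [Set.mem_setOf_eq, hmeanS]
      refine le_abs.mpr (Or.inr ?_)
      rw [hcdef] at hlt ⊢
      linarith
    have := (measure_mono hsub).trans (meas_ge_le_variance_div_sq hSL2 hc)
    rw [hvarS] at this
    calc (P Aᶜ).toReal ≤ (ENNReal.ofReal ((N:ℝ) * σ2 / c ^ 2)).toReal :=
          ENNReal.toReal_mono ENNReal.ofReal_ne_top this
      _ = (N:ℝ) * σ2 / c ^ 2 := ENNReal.toReal_ofReal (by positivity)
  -- integral of g
  have hintg : ∫ ω, g ω ∂P = (N:ℝ) * (σ2 + μt ^ 2) / c ^ 2 := by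
    rw [hgdef]
    rw [integral_div, integral_finset_sum _ fun i _ => hζsqint i]
    simp [hsq, Finset.sum_const]
    ring
  -- put everything together
  have hmain : ∫ ω, f ω ∂P
      ≤ (N:ℝ) * (σ2 + μt ^ 2) / c ^ 2 + (N:ℝ) * σ2 / c ^ 2 := by
    calc ∫ ω, f ω ∂P
        ≤ ∫ ω, (A.indicator g ω + Aᶜ.indicator (fun _ => (1:ℝ)) ω) ∂P :=
          integral_mono hfint hrhsint key
      _ = ∫ ω, A.indicator g ω ∂P + ∫ ω, Aᶜ.indicator (fun _ => (1:ℝ)) ω ∂P :=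
          integral_add (hgint.indicator hAmeas) ((integrable_const 1).indicator hAmeas.compl)
      _ ≤ ∫ ω, g ω ∂P + (P Aᶜ).toReal := by
          apply add_le_add
          · refine integral_mono (hgint.indicator hAmeas) hgint fun ω => ?_
            exact Set.indicator_le_self' (fun x _ => hgnn x) ω
          · exact le_of_eq (integral_indicator_one hAmeas.compl)
      _ ≤ (N:ℝ) * (σ2 + μt ^ 2) / c ^ 2 + (N:ℝ) * σ2 / c ^ 2 := by
          rw [hintg]; gcongr
  refine hmain.trans ?_
  rw [hcdef, ← add_div, div_le_div_iff₀ (by positivity) (by positivity)]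
  ring_nf
  nlinarith [sq_nonneg μt, mul_pos hNr hμpos, sq_nonneg ((N:ℝ)*μt), hNr, hσ2,
    mul_nonneg (mul_nonneg (sq_nonneg (N:ℝ)) (sq_nonneg μt)) hσ2,
    mul_nonneg (sq_nonneg ((N:ℝ)*μt)) (sq_nonneg μt)]
end
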